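/- The canonical model is an L^A_CS-subset model: for a logic L^A_CS, define the canonical model M^C = (W^C, W0^C, V^C, E^C) by W^C = P(L_J^A); W0^C = {Γ ∈ W^C | Γ is a maximal L^A_CS-consistent set of formulas}; V^C(Γ,F)=1 iff F ∈ Γ; and E^C(Γ,t) = {Δ ∈ W^C | Δ ⊇ Γ/t}, where Γ/t := {F ∈ L_J^A | t:F ∈ Γ}. If L^A does not contain jd, or contains jd and either CS is axiomatically appropriate or jt ∈ L^A, then M^C is an L^A_CS-subset model. -/

import Mathlib

/-- Justification terms `Tm^A`: constants `c_i`, variables `x_i`, application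
`·`, sum `+` and `!`. -/
inductive TmA : Type
  | const : ℕ → TmA
  | var : ℕ → TmA
  | app : TmA → TmA → TmA
  | plus : TmA → TmA → TmA
  | bang : TmA → TmA

/-- Formulas of `L_J^A`: atomic propositions, `⊥`, implication and `t:F`. -/
inductive FmlA : Type
  | atom : ℕ → FmlA
  | bot : FmlA
  | imp : FmlA → FmlA → FmlA
  | just : TmA → FmlA → FmlA

namespace FmlA
/-- `¬A := A → ⊥`. -/
def neg (A : FmlA) : FmlA := A.imp .bot
/-- `A ∨ B := ¬A → B`. -/
def or' (A B : FmlA) : FmlA := A.neg.imp B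
/-- `A ∧ B := ¬(A → ¬B)`. -/
def and' (A B : FmlA) : FmlA := (A.imp B.neg).neg
end FmlA

/-- Which of the optional axioms j4, jd, jt belong to the logic `L^A`. -/
structure FlagsA : Type where
  j4 : Bool
  jd : Bool
  jt : Bool

/-- The axioms of the logic `L^A`: classical propositional axioms, j, j+,
together with the optional axioms j4, jd, jt as given by the flags. -/
inductive AAxiom (fl : FlagsA) : FmlA → Prop
  | cl1 (A B : FmlA) : AAxiom fl (A.imp (B.imp A))
  | cl2 (A B C : FmlA) :
      AAxiom fl ((A.imp (B.imp C)).imp ((A.imp B).imp (A.imp C)))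
  | cl3 (A : FmlA) : AAxiom fl (A.neg.neg.imp A)
  | j (s t : TmA) (A B : FmlA) :
      AAxiom fl ((FmlA.just s (A.imp B)).imp
        ((FmlA.just t A).imp (FmlA.just (s.app t) B)))
  | jplus (s t : TmA) (A : FmlA) :
      AAxiom fl (((FmlA.just s A).or' (FmlA.just t A)).imp
        (FmlA.just (s.plus t) A))
  | j4 (t : TmA) (A : FmlA) (h : fl.j4 = true) :
      AAxiom fl ((FmlA.just t A).imp (FmlA.just t.bang (FmlA.just t A)))
  | jd (t : TmA) (h : fl.jd = true) :
      AAxiom fl ((FmlA.just t FmlA.bot).imp FmlA.bot)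
  | jt (t : TmA) (A : FmlA) (h : fl.jt = true) :
      AAxiom fl ((FmlA.just t A).imp A)

/-- `bangIterA n t = !…!t` with `n` occurrences of `!`. -/
def bangIterA : ℕ → TmA → TmA
  | 0, t => t
  | n + 1, t => (bangIterA n t).bang

/-- `anFmlA c A n = !…!c : !…!c : … : !c : c : A` (with `n, n-1, …, 1, 0` bangs). -/
def anFmlA (c : TmA) (A : FmlA) : ℕ → FmlA
  | 0 => FmlA.just c A
  | n + 1 => FmlA.just (bangIterA (n + 1) c) (anFmlA c A n)

/-- A constant specification for `L^A`: a set of pairs `(c, A)` where `c` is a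
constant and `A` an axiom of `L^A`. -/
def IsCSA (fl : FlagsA) (CS : Set (ℕ × FmlA)) : Prop :=
  ∀ p ∈ CS, AAxiom fl p.2

/-- `CS` is axiomatically appropriate: every axiom has a constant justifying it. -/
def AxAppropriateA (fl : FlagsA) (CS : Set (ℕ × FmlA)) : Prop :=
  ∀ A : FmlA, AAxiom fl A → ∃ c : ℕ, (c, A) ∈ CS

/-- Hilbert-style derivability in `L^A_CS`: axioms of `L^A`, modus ponens, and
axiom necessitation. -/
inductive DerivA (fl : FlagsA) (CS : Set (ℕ × FmlA)) : FmlA → Prop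
  | ax {A : FmlA} : AAxiom fl A → DerivA fl CS A
  | mp {A B : FmlA} : DerivA fl CS (A.imp B) → DerivA fl CS A → DerivA fl CS B
  | an {c : ℕ} {A : FmlA} (n : ℕ) (h : (c, A) ∈ CS) :
      DerivA fl CS (anFmlA (TmA.const c) A n)

/-- An `L^A_CS`-subset model `(W, W0, V, E)`; `V ω F` encodes `V(ω,F) = 1`. -/
structure AModel (fl : FlagsA) (CS : Set (ℕ × FmlA)) (W : Type*) : Type _ where
  W0 : Set W
  V : W → FmlA → Prop
  E : W → TmA → Set W
  w0_nonempty : W0.Nonempty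
  v_bot : ∀ ω ∈ W0, ¬ V ω FmlA.bot
  v_imp : ∀ ω ∈ W0, ∀ F G : FmlA, V ω (F.imp G) ↔ (¬ V ω F ∨ V ω G)
  v_just : ∀ ω ∈ W0, ∀ (t : TmA) (F : FmlA),
      V ω (FmlA.just t F) ↔ E ω t ⊆ {υ | V υ F}
  e_plus : ∀ ω ∈ W0, ∀ s t : TmA, E ω (s.plus t) ⊆ E ω s ∩ E ω t
  e_app : ∀ ω ∈ W0, ∀ s t : TmA,
      E ω (s.app t) ⊆ {υ | ∀ F : FmlA,
        (∃ H : FmlA, E ω s ⊆ {x | V x (H.imp F)} ∧ E ω t ⊆ {x | V x H}) →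
          V υ F}
  e_jd : fl.jd = true → ∀ ω ∈ W0, ∀ t : TmA, ∃ υ ∈ W0, υ ∈ E ω t
  e_jt : fl.jt = true → ∀ ω ∈ W0, ∀ t : TmA, ω ∈ E ω t
  e_j4 : fl.j4 = true → ∀ ω ∈ W0, ∀ t : TmA,
      E ω t.bang ⊆ {υ | ∀ F : FmlA, V ω (FmlA.just t F) → V υ (FmlA.just t F)}
  e_cs : ∀ ω ∈ W0, ∀ (c : ℕ) (A : FmlA), (c, A) ∈ CS →
      E ω (TmA.const c) ⊆ {υ | V υ A}
  e_cs_bang : ∀ ω ∈ W0, ∀ (c : ℕ) (A : FmlA), (c, A) ∈ CS → ∀ n : ℕ,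
      E ω (bangIterA (n + 1) (TmA.const c)) ⊆
        {υ | V υ (anFmlA (TmA.const c) A n)}

/-- The conjunction `⋀Σ` of a finite (list of) formulas. -/
def conjListA : List FmlA → FmlA
  | [] => FmlA.bot.imp FmlA.bot
  | A :: l => A.and' (conjListA l)

/-- `Γ` is `L^A_CS`-consistent: `L^A_CS ⊬ ⋀Σ → ⊥` for every finite `Σ ⊆ Γ`. -/
def SetConsistentA (fl : FlagsA) (CS : Set (ℕ × FmlA)) (Γ : Set FmlA) : Prop :=
  ∀ l : List FmlA, (∀ A ∈ l, A ∈ Γ) →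
    ¬ DerivA fl CS ((conjListA l).imp FmlA.bot)

/-- `Γ` is maximal `L^A_CS`-consistent: it is consistent and no proper superset
of it is consistent. -/
def MaxConsistentA (fl : FlagsA) (CS : Set (ℕ × FmlA)) (Γ : Set FmlA) : Prop :=
  SetConsistentA fl CS Γ ∧ ∀ Δ : Set FmlA, Γ ⊂ Δ → ¬ SetConsistentA fl CS Δ

/-- `Γ/t := {F | t:F ∈ Γ}`. -/
def slashA (Γ : Set FmlA) (t : TmA) : Set FmlA := {F | FmlA.just t F ∈ Γ}

/-- The canonical evidence function: `E^C(Γ,t) = {Δ | Δ ⊇ Γ/t}`. -/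
def canonicalEA (Γ : Set FmlA) (t : TmA) : Set (Set FmlA) :=
  {Δ | slashA Γ t ⊆ Δ}

namespace CanA

variable {fl : FlagsA} {CS : Set (ℕ × FmlA)}

/-- Derivability from a set of hypotheses. -/
inductive DF (fl : FlagsA) (CS : Set (ℕ × FmlA)) (Γ : Set FmlA) : FmlA → Prop
  | ax {A : FmlA} : AAxiom fl A → DF fl CS Γ A
  | an {c : ℕ} {A : FmlA} (n : ℕ) (h : (c, A) ∈ CS) :
      DF fl CS Γ (anFmlA (TmA.const c) A n)
  | hyp {A : FmlA} : A ∈ Γ → DF fl CS Γ A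
  | mp {A B : FmlA} : DF fl CS Γ (A.imp B) → DF fl CS Γ A → DF fl CS Γ B

theorem DF.of_deriv {Γ : Set FmlA} {A : FmlA} (h : DerivA fl CS A) :
    DF fl CS Γ A := by
  induction h with
  | ax h => exact .ax h
  | mp _ _ ih1 ih2 => exact .mp ih1 ih2
  | an n h => exact .an n h

theorem DF.empty {A : FmlA} (h : DF fl CS ∅ A) : DerivA fl CS A := by
  induction h with
  | ax h => exact .ax h
  | an n h => exact .an n h
  | hyp h => exact absurd h (Set.notMem_empty _)
  | mp _ _ ih1 ih2 => exact .mp ih1 ih2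

theorem DF.id {Γ : Set FmlA} {A : FmlA} : DF fl CS Γ (A.imp A) :=
  .mp (.mp (.ax (.cl2 A (A.imp A) A)) (.ax (.cl1 A (A.imp A)))) (.ax (.cl1 A A))

/-- Deduction theorem. -/
theorem ded {Γ : Set FmlA} {A B : FmlA} (h : DF fl CS (insert A Γ) B) :
    DF fl CS Γ (A.imp B) := by
  induction h with
  | ax h => exact .mp (.ax (.cl1 _ A)) (.ax h)
  | an n h => exact .mp (.ax (.cl1 _ A)) (.an n h)
  | hyp h =>
    rcases Set.mem_insert_iff.mp h with h | h
    · subst h; exact DF.id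
    · exact .mp (.ax (.cl1 _ A)) (.hyp h)
  | mp _ _ ih1 ih2 => exact .mp (.mp (.ax (.cl2 A _ _)) ih1) ih2

theorem efq {Γ : Set FmlA} {B : FmlA} : DF fl CS Γ (FmlA.bot.imp B) :=
  ded (.mp (.ax (.cl3 B))
    (.mp (.ax (.cl1 FmlA.bot B.neg)) (.hyp (Set.mem_insert _ _))))

theorem comp {Γ : Set FmlA} {A B C : FmlA} (h1 : DF fl CS Γ (A.imp B))
    (h2 : DF fl CS Γ (B.imp C)) : DF fl CS Γ (A.imp C) :=
  .mp (.mp (.ax (.cl2 A B C)) (.mp (.ax (.cl1 (B.imp C) A)) h2)) h1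

theorem andIntro {Γ : Set FmlA} {A B : FmlA} :
    DF fl CS Γ (A.imp (B.imp (A.and' B))) := by
  refine ded (ded (ded ?_))
  exact .mp
    (.mp (.hyp (Set.mem_insert _ _))
      (.hyp (Set.mem_insert_of_mem _ (Set.mem_insert_of_mem _ (Set.mem_insert _ _)))))
    (.hyp (Set.mem_insert_of_mem _ (Set.mem_insert _ _)))

theorem andE1 {Γ : Set FmlA} {A B : FmlA} : DF fl CS Γ ((A.and' B).imp A) := by
  refine ded (.mp (.ax (.cl3 A)) (ded (.mp (.hyp (Set.mem_insert_of_mem _ (Set.mem_insert _ _))) (ded ?_))))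
  exact .mp efq (.mp (.hyp (Set.mem_insert_of_mem _ (Set.mem_insert _ _))) (.hyp (Set.mem_insert _ _)))

theorem andE2 {Γ : Set FmlA} {A B : FmlA} : DF fl CS Γ ((A.and' B).imp B) := by
  refine ded (.mp (.ax (.cl3 B)) (ded ?_))
  exact .mp (.hyp (Set.mem_insert_of_mem _ (Set.mem_insert _ _)))
    (.mp (.ax (.cl1 B.neg A)) (.hyp (Set.mem_insert _ _)))

theorem conj_intro {Γ : Set FmlA} :
    ∀ l : List FmlA, (∀ A ∈ l, DF fl CS Γ A) → DF fl CS Γ (conjListA l)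
  | [], _ => DF.id
  | A :: l, h =>
    .mp (.mp andIntro (h A (by simp)))
      (conj_intro l (fun B hB => h B (by simp [hB])))

theorem pairI {Γ : Set FmlA} {X A B : FmlA} (h1 : DF fl CS Γ (X.imp A))
    (h2 : DF fl CS Γ (X.imp B)) : DF fl CS Γ (X.imp (A.and' B)) :=
  .mp (.mp (.ax (.cl2 X B (A.and' B))) (comp h1 andIntro)) h2

theorem conj_app_left {Γ : Set FmlA} :
    ∀ l₁ l₂ : List FmlA, DF fl CS Γ ((conjListA (l₁ ++ l₂)).imp (conjListA l₁))
  | [], _ => .mp (.ax (.cl1 _ _)) DF.id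
  | _ :: l₁, l₂ => pairI andE1 (comp andE2 (conj_app_left l₁ l₂))

theorem conj_app_right {Γ : Set FmlA} :
    ∀ l₁ l₂ : List FmlA, DF fl CS Γ ((conjListA (l₁ ++ l₂)).imp (conjListA l₂))
  | [], _ => DF.id
  | _ :: l₁, l₂ => comp andE2 (conj_app_right l₁ l₂)

theorem DF.to_fin {Γ : Set FmlA} {A : FmlA} (h : DF fl CS Γ A) :
    ∃ l : List FmlA, (∀ B ∈ l, B ∈ Γ) ∧
      DerivA fl CS ((conjListA l).imp A) := by
  induction h with
  | ax h => exact ⟨[], by simp, .mp (.ax (.cl1 _ _)) (.ax h)⟩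
  | an n h => exact ⟨[], by simp, .mp (.ax (.cl1 _ _)) (.an n h)⟩
  | @hyp A h => exact ⟨[A], by simpa using h, DF.empty andE1⟩
  | mp _ _ ih1 ih2 =>
    obtain ⟨l₁, hl₁, d₁⟩ := ih1
    obtain ⟨l₂, hl₂, d₂⟩ := ih2
    refine ⟨l₁ ++ l₂, ?_, ?_⟩
    · intro B hB; rcases List.mem_append.mp hB with hB | hB
      exacts [hl₁ B hB, hl₂ B hB]
    · have e1 := comp (conj_app_left (Γ := (∅ : Set FmlA)) l₁ l₂) (DF.of_deriv d₁)
      have e2 := comp (conj_app_right (Γ := (∅ : Set FmlA)) l₁ l₂) (DF.of_deriv d₂)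
      exact DF.empty (.mp (.mp (.ax (.cl2 _ _ _)) e1) e2)

theorem fin_DF {Γ : Set FmlA} {l : List FmlA} (hl : ∀ B ∈ l, B ∈ Γ) {A : FmlA}
    (hd : DerivA fl CS ((conjListA l).imp A)) : DF fl CS Γ A :=
  .mp (.of_deriv hd) (conj_intro l fun B hB => .hyp (hl B hB))

theorem consistent_iff {Γ : Set FmlA} :
    SetConsistentA fl CS Γ ↔ ¬ DF fl CS Γ FmlA.bot := by
  constructor
  · intro hc hdf
    obtain ⟨l, hl, hd⟩ := hdf.to_fin
    exact hc l hl hd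
  · intro h l hl hd
    exact h (fin_DF hl hd)

theorem mcs_df {Γ : Set FmlA} (hm : MaxConsistentA fl CS Γ) {A : FmlA}
    (h : DF fl CS Γ A) : A ∈ Γ := by
  by_contra hA
  have hnc := hm.2 _ (Set.ssubset_insert hA)
  rw [consistent_iff, not_not] at hnc
  exact (consistent_iff.mp hm.1) (.mp (ded hnc) h)

theorem mcs_thm {Γ : Set FmlA} (hm : MaxConsistentA fl CS Γ) {A : FmlA}
    (h : DerivA fl CS A) : A ∈ Γ := mcs_df hm (.of_deriv h)

theorem mcs_mp {Γ : Set FmlA} (hm : MaxConsistentA fl CS Γ) {A B : FmlA}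
    (h1 : A.imp B ∈ Γ) (h2 : A ∈ Γ) : B ∈ Γ :=
  mcs_df hm (.mp (.hyp h1) (.hyp h2))

theorem mcs_not_bot {Γ : Set FmlA} (hm : MaxConsistentA fl CS Γ) :
    FmlA.bot ∉ Γ := fun h => (consistent_iff.mp hm.1) (.hyp h)

theorem mcs_imp_iff {Γ : Set FmlA} (hm : MaxConsistentA fl CS Γ) {A B : FmlA} :
    A.imp B ∈ Γ ↔ (A ∉ Γ ∨ B ∈ Γ) := by
  constructor
  · intro h
    by_cases hA : A ∈ Γ
    · exact Or.inr (mcs_mp hm h hA)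
    · exact Or.inl hA
  · rintro (hA | hB)
    · have hnc := hm.2 _ (Set.ssubset_insert hA)
      rw [consistent_iff, not_not] at hnc
      exact mcs_df hm (comp (ded hnc) efq)
    · exact mcs_df hm (.mp (.ax (.cl1 B A)) (.hyp hB))

/-- Classical evaluation treating `t:F` as `F`; used for consistency. -/
def evalA : FmlA → Prop
  | .atom _ => True
  | .bot => False
  | .imp A B => evalA A → evalA B
  | .just _ F => evalA F

theorem evalA_axiom {A : FmlA} (h : AAxiom fl A) : evalA A := by
  cases h <;> simp only [evalA, FmlA.neg, FmlA.or', FmlA.and'] <;> tauto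

theorem evalA_an (c : TmA) (A : FmlA) : ∀ n : ℕ, evalA (anFmlA c A n) ↔ evalA A
  | 0 => Iff.rfl
  | n + 1 => evalA_an c A n

theorem evalA_deriv (hCS : IsCSA fl CS) {A : FmlA} (h : DerivA fl CS A) :
    evalA A := by
  induction h with
  | ax h => exact evalA_axiom h
  | mp _ _ ih1 ih2 => exact ih1 ih2
  | @an c A n h => exact (evalA_an _ A n).mpr (evalA_axiom (hCS _ h))

theorem empty_consistent (hCS : IsCSA fl CS) :
    SetConsistentA fl CS (∅ : Set FmlA) := by
  intro l hl hd
  cases l with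
  | nil => exact evalA_deriv hCS hd (fun h => h)
  | cons A l => exact absurd (hl A (by simp)) (Set.notMem_empty _)

theorem lindenbaum {Γ : Set FmlA} (hc : SetConsistentA fl CS Γ) :
    ∃ Δ : Set FmlA, Γ ⊆ Δ ∧ MaxConsistentA fl CS Δ := by
  have hzorn : ∀ c ⊆ {Δ : Set FmlA | ¬ DF fl CS Δ FmlA.bot},
      IsChain (· ⊆ ·) c → c.Nonempty →
      ∃ ub ∈ {Δ : Set FmlA | ¬ DF fl CS Δ FmlA.bot}, ∀ s ∈ c, s ⊆ ub := by
    intro c hcS hchain hcne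
    refine ⟨⋃₀ c, ?_, fun s hs => Set.subset_sUnion_of_mem hs⟩
    intro hdf
    obtain ⟨l, hl, hd⟩ := hdf.to_fin
    have key : ∀ l : List FmlA, (∀ A ∈ l, A ∈ ⋃₀ c) →
        ∃ Δ ∈ c, ∀ A ∈ l, A ∈ Δ := by
      intro l
      induction l with
      | nil => exact fun _ => ⟨hcne.choose, hcne.choose_spec, by simp⟩
      | cons A l ih =>
        intro h
        obtain ⟨Δ, hΔc, hΔ⟩ := ih (fun B hB => h B (by simp [hB]))
        obtain ⟨Δ', hΔ'c, hA⟩ := h A (by simp)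
        rcases hchain.total hΔc hΔ'c with hsub | hsub
        · refine ⟨Δ', hΔ'c, ?_⟩
          intro B hB
          rcases List.mem_cons.mp hB with rfl | hB
          exacts [hA, hsub (hΔ B hB)]
        · refine ⟨Δ, hΔc, ?_⟩
          intro B hB
          rcases List.mem_cons.mp hB with rfl | hB
          exacts [hsub hA, hΔ B hB]
    obtain ⟨Δ, hΔc, hΔ⟩ := key l hl
    exact (hcS hΔc) (fin_DF hΔ hd)
  obtain ⟨m, hΓm, hmS, hmax⟩ :=
    zorn_subset_nonempty {Δ : Set FmlA | ¬ DF fl CS Δ FmlA.bot} hzorn Γ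
      (consistent_iff.mp hc)
  refine ⟨m, hΓm, consistent_iff.mpr hmS, ?_⟩
  intro Δ hΔ hΔc
  exact hΔ.not_subset (hmax (consistent_iff.mp hΔc) hΔ.subset)

theorem internalize (hap : AxAppropriateA fl CS) {A : FmlA}
    (h : DerivA fl CS A) : ∃ u : TmA, DerivA fl CS (FmlA.just u A) := by
  induction h with
  | @ax A h =>
    obtain ⟨c, hc⟩ := hap A h
    exact ⟨TmA.const c, DerivA.an 0 hc⟩
  | mp _ _ ih1 ih2 =>
    obtain ⟨u, hu⟩ := ih1
    obtain ⟨v, hv⟩ := ih2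
    exact ⟨u.app v, .mp (.mp (.ax (.j u v _ _)) hu) hv⟩
  | @an c A n h => exact ⟨bangIterA (n + 1) (TmA.const c), DerivA.an (n + 1) h⟩

theorem slash_consistent {Γ : Set FmlA} (hm : MaxConsistentA fl CS Γ)
    (hside : AxAppropriateA fl CS ∨ fl.jt = true) (hjd : fl.jd = true)
    (t : TmA) : SetConsistentA fl CS (slashA Γ t) := by
  rcases hside with hap | hjt
  · rw [consistent_iff]
    intro hdf
    obtain ⟨l, hl, hd⟩ := hdf.to_fin
    have key : ∀ l : List FmlA, (∀ A ∈ l, FmlA.just t A ∈ Γ) →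
        ∃ s : TmA, FmlA.just s (conjListA l) ∈ Γ := by
      intro l
      induction l with
      | nil =>
        obtain ⟨u, hu⟩ :=
          internalize hap (DF.empty (DF.id (A := FmlA.bot)))
        exact fun _ => ⟨u, mcs_thm hm hu⟩
      | cons A l ih =>
        intro h
        obtain ⟨s, hs⟩ := ih (fun B hB => h B (by simp [hB]))
        obtain ⟨w, hw⟩ :=
          internalize hap (DF.empty (andIntro (A := A) (B := conjListA l)))
        have h1 : FmlA.just (w.app t)
            ((conjListA l).imp (conjListA (A :: l))) ∈ Γ :=
          mcs_mp hm (mcs_mp hm (mcs_thm hm (.ax (.j w t _ _)))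
            (mcs_thm hm hw)) (h A (by simp))
        exact ⟨(w.app t).app s,
          mcs_mp hm (mcs_mp hm (mcs_thm hm (.ax (.j (w.app t) s _ _))) h1) hs⟩
    obtain ⟨s, hs⟩ := key l hl
    obtain ⟨u, hu⟩ := internalize hap hd
    have hbot : FmlA.just (u.app s) FmlA.bot ∈ Γ :=
      mcs_mp hm (mcs_mp hm (mcs_thm hm (.ax (.j u s _ _))) (mcs_thm hm hu)) hs
    exact mcs_not_bot hm
      (mcs_mp hm (mcs_thm hm (.ax (.jd (u.app s) hjd))) hbot)
  · intro l hl hd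
    exact hm.1 l
      (fun A hA => mcs_mp hm (mcs_thm hm (.ax (.jt t A hjt))) (hl A hA)) hd

end CanA

namespace CanA

theorem mem_canonicalEA_self (Γ : Set FmlA) (t : TmA) :
    slashA Γ t ∈ canonicalEA Γ t := show slashA Γ t ⊆ slashA Γ t from subset_refl _

theorem orI1 {fl : FlagsA} {CS : Set (ℕ × FmlA)} {Γ : Set FmlA} {A B : FmlA} :
    DF fl CS Γ (A.imp (A.or' B)) :=
  ded (ded (.mp efq (.mp (.hyp (Set.mem_insert _ _))
    (.hyp (Set.mem_insert_of_mem _ (Set.mem_insert _ _))))))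

end CanA

/-- **The canonical model is an `L^A_CS`-subset model**: the structure with
worlds `W^C = P(L_J^A)`, normal worlds the maximal `L^A_CS`-consistent sets,
`V^C(Γ,F)=1` iff `F ∈ Γ`, and `E^C(Γ,t) = {Δ | Δ ⊇ Γ/t}` is an `L^A_CS`-subset
model, provided `L^A` does not contain jd, or contains jd and either `CS` is
axiomatically appropriate or `jt ∈ L^A`. -/
theorem canonical_model_is_A_subset_model (fl : FlagsA) (CS : Set (ℕ × FmlA))
    (hCS : IsCSA fl CS)
    (h : fl.jd = false ∨
      (fl.jd = true ∧ (AxAppropriateA fl CS ∨ fl.jt = true))) :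
    ∃ M : AModel fl CS (Set FmlA),
      M.W0 = {Γ : Set FmlA | MaxConsistentA fl CS Γ} ∧
      M.V = (fun Γ F => F ∈ Γ) ∧
      M.E = canonicalEA := by
  refine ⟨{
    W0 := {Γ : Set FmlA | MaxConsistentA fl CS Γ}
    V := fun Γ F => F ∈ Γ
    E := canonicalEA
    w0_nonempty := by
      obtain ⟨Δ, _, hΔ⟩ := CanA.lindenbaum (CanA.empty_consistent hCS)
      exact ⟨Δ, hΔ⟩
    v_bot := fun Γ hΓ => CanA.mcs_not_bot hΓ
    v_imp := fun Γ hΓ F G => CanA.mcs_imp_iff hΓ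
    v_just := by
      intro Γ _ t F
      constructor
      · intro hj Δ hΔ
        exact hΔ hj
      · intro hsub
        exact hsub (CanA.mem_canonicalEA_self Γ t)
    e_plus := by
      intro Γ hΓ s t Δ hΔ
      constructor
      · intro F hF
        refine hΔ ?_
        exact CanA.mcs_mp hΓ (CanA.mcs_thm hΓ (.ax (.jplus s t F)))
          (CanA.mcs_df hΓ (.mp CanA.orI1 (.hyp hF)))
      · intro F hF
        refine hΔ ?_
        exact CanA.mcs_mp hΓ (CanA.mcs_thm hΓ (.ax (.jplus s t F)))
          (CanA.mcs_df hΓ (.mp (.ax (.cl1 (FmlA.just t F) (FmlA.just s F).neg))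
            (.hyp hF)))
    e_app := by
      rintro Γ hΓ s t Δ hΔ F ⟨H, hs, ht⟩
      have hsF : FmlA.just s (H.imp F) ∈ Γ :=
        hs (CanA.mem_canonicalEA_self Γ s)
      have htH : FmlA.just t H ∈ Γ :=
        ht (CanA.mem_canonicalEA_self Γ t)
      exact hΔ (CanA.mcs_mp hΓ
        (CanA.mcs_mp hΓ (CanA.mcs_thm hΓ (.ax (.j s t H F))) hsF) htH)
    e_jd := by
      intro hjd Γ hΓ t
      have hside : AxAppropriateA fl CS ∨ fl.jt = true := by
        rcases h with h | ⟨_, h⟩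
        · rw [h] at hjd; exact absurd hjd (by simp)
        · exact h
      obtain ⟨Δ, hsub, hΔ⟩ :=
        CanA.lindenbaum (CanA.slash_consistent hΓ hside hjd t)
      exact ⟨Δ, hΔ, hsub⟩
    e_jt := by
      intro hjt Γ hΓ t F hF
      exact CanA.mcs_mp hΓ (CanA.mcs_thm hΓ (.ax (.jt t F hjt))) hF
    e_j4 := by
      intro hj4 Γ hΓ t Δ hΔ F hF
      exact hΔ (CanA.mcs_mp hΓ (CanA.mcs_thm hΓ (.ax (.j4 t F hj4))) hF)
    e_cs := by
      intro Γ hΓ c A hcA Δ hΔ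
      exact hΔ (CanA.mcs_thm hΓ (DerivA.an 0 hcA))
    e_cs_bang := by
      intro Γ hΓ c A hcA n Δ hΔ
      exact hΔ (CanA.mcs_thm hΓ (DerivA.an (n + 1) hcA)) },
    rfl, rfl, rfl⟩
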